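/- Let μ ∈ ℂ with μ ∉ {0, 1}, a = (μ+μ⁻¹)/2, b = i(μ⁻¹−μ)/2, regarded as quaternions in the real span of 1 and i. Let n ∈ ℍ with Re n = 0 and n² = −1, φ ∈ ℍ \ {0}, T = ½(n·φ·(a−1)·φ⁻¹ + φ·b·φ⁻¹), ρ̂ = φ·((1−a)/2)·φ⁻¹, T̂ = T·ρ̂⁻¹, and γ_∞ = (1 − conj(μ)⁻¹)/(1 − μ) ∈ ℂ. Define the real-linear bijection r_∞ : ℍ → ℍ by r_∞(φ·c + φ·j·d) = φ·γ_∞·c + φ·j·d for c, d ∈ ℂ. Then T̂·E = r_∞(E), where E = {ψ ∈ ℍ : n·ψ = ψ·i}; consequently {ψ ∈ ℍ : N̂·ψ = ψ·i} = r_∞(E) for N̂ = T⁻¹·n·T. (Pointwise form of Theorem 6.1: the μ-Darboux transform of a harmonic map coincides with its simple factor dressing.) -/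

import Mathlib

/- Pointwise form of Theorem 6.1: the μ-Darboux transform of a harmonic map
coincides with its simple factor dressing: T̂E = r_∞(E), hence the +i
eigenspace of N̂ = T⁻¹nT is r_∞(E). -/

noncomputable section
open Complex

local notation "ℍ" => Quaternion ℝ

/-- The quaternion unit i. -/
def qi : ℍ := ⟨0,1,0,0⟩

/-- The quaternion unit j. -/
def qj : ℍ := ⟨0,0,1,0⟩

/-- Embedding of ℂ into ℍ as the real span of 1 and i. -/
def cq (z : ℂ) : ℍ := ⟨z.re, z.im, 0, 0⟩

/-- a = (μ+μ⁻¹)/2. -/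
def aμ (μ : ℂ) : ℂ := (μ + μ⁻¹) / 2

/-- b = i(μ⁻¹−μ)/2. -/
def bμ (μ : ℂ) : ℂ := Complex.I * (μ⁻¹ - μ) / 2

/-- T = ½(n·φ·(a−1)·φ⁻¹ + φ·b·φ⁻¹). -/
def Tq (μ : ℂ) (n φ : ℍ) : ℍ :=
  (n * (φ * cq (aμ μ - 1) * φ⁻¹) + φ * cq (bμ μ) * φ⁻¹) / 2

/-- ρ̂ = φ·((1−a)/2)·φ⁻¹. -/
def ρhat (μ : ℂ) (φ : ℍ) : ℍ := φ * cq ((1 - aμ μ) / 2) * φ⁻¹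

/-- T̂ = T·ρ̂⁻¹. -/
def That (μ : ℂ) (n φ : ℍ) : ℍ := Tq μ n φ * (ρhat μ φ)⁻¹

/-- γ_∞ = (1 − μ̄⁻¹)/(1 − μ). -/
def γinf (μ : ℂ) : ℂ := (1 - (starRingEnd ℂ μ)⁻¹) / (1 - μ)

/-! ### Auxiliary quaternion algebra -/

@[simp] lemma cq_re (z : ℂ) : (cq z).re = z.re := rfl
@[simp] lemma cq_imI (z : ℂ) : (cq z).imI = z.im := rfl
@[simp] lemma cq_imJ (z : ℂ) : (cq z).imJ = 0 := rfl
@[simp] lemma cq_imK (z : ℂ) : (cq z).imK = 0 := rfl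
@[simp] lemma qj_re : qj.re = 0 := rfl
@[simp] lemma qj_imI : qj.imI = 0 := rfl
@[simp] lemma qj_imJ : qj.imJ = 1 := rfl
@[simp] lemma qj_imK : qj.imK = 0 := rfl
@[simp] lemma qi_re : qi.re = 0 := rfl
@[simp] lemma qi_imI : qi.imI = 1 := rfl
@[simp] lemma qi_imJ : qi.imJ = 0 := rfl
@[simp] lemma qi_imK : qi.imK = 0 := rfl

def Q2 (c d : ℂ) : ℍ := cq c + qj * cq d

lemma Q2_mul (a b c d : ℂ) : Q2 a b * Q2 c d
    = Q2 (a*c - (starRingEnd ℂ) b * d) ((starRingEnd ℂ) a * d + b * c) := by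
  ext <;> simp [Q2, Quaternion.re_mul, Quaternion.imI_mul, Quaternion.imJ_mul,
    Quaternion.imK_mul] <;> ring

lemma Q2_eq_iff {a b c d : ℂ} : Q2 a b = Q2 c d ↔ a = c ∧ b = d := by
  constructor
  · intro h
    constructor <;> apply Complex.ext
    · simpa [Q2, Quaternion.re_mul, Quaternion.imI_mul, Quaternion.imJ_mul, Quaternion.imK_mul] using congrArg (fun q : ℍ => q.re) h
    · simpa [Q2, Quaternion.re_mul, Quaternion.imI_mul, Quaternion.imJ_mul, Quaternion.imK_mul] using congrArg (fun q : ℍ => q.imI) h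
    · simpa [Q2, Quaternion.re_mul, Quaternion.imI_mul, Quaternion.imJ_mul, Quaternion.imK_mul] using congrArg (fun q : ℍ => q.imJ) h
    · simpa [Q2, Quaternion.re_mul, Quaternion.imI_mul, Quaternion.imJ_mul, Quaternion.imK_mul] using (congrArg (fun q : ℍ => q.imK) h)
  · rintro ⟨rfl, rfl⟩; rfl

lemma exists_Q2 (q : ℍ) : ∃ c d : ℂ, q = Q2 c d ∧ c.re = q.re :=
  ⟨⟨q.re, q.imI⟩, ⟨q.imJ, -q.imK⟩, by ext <;> simp [Q2, Quaternion.re_mul, Quaternion.imI_mul, Quaternion.imJ_mul, Quaternion.imK_mul], rfl⟩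

lemma cq_eq_Q2 (z : ℂ) : cq z = Q2 z 0 := by ext <;> simp [Q2, Quaternion.re_mul, Quaternion.imI_mul, Quaternion.imJ_mul, Quaternion.imK_mul]
lemma qi_eq : qi = Q2 Complex.I 0 := by ext <;> simp [Q2, Quaternion.re_mul, Quaternion.imI_mul, Quaternion.imJ_mul, Quaternion.imK_mul]
lemma cq_mul (a b : ℂ) : cq (a*b) = cq a * cq b := by
  ext <;> simp [Quaternion.re_mul, Quaternion.imI_mul, Quaternion.imJ_mul,
    Quaternion.imK_mul] <;> ring
lemma cq_one : cq 1 = 1 := by ext <;> simp [Quaternion.re_one, Quaternion.imI_one, Quaternion.imJ_one, Quaternion.imK_one]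
lemma cq_zero : cq 0 = 0 := by ext <;> simp [Quaternion.re_zero, Quaternion.imI_zero, Quaternion.imJ_zero, Quaternion.imK_zero]
lemma cq_eq_zero {z : ℂ} : cq z = 0 ↔ z = 0 := by
  constructor
  · intro h
    apply Complex.ext
    · simpa [Quaternion.re_zero, Quaternion.imI_zero, Quaternion.imJ_zero, Quaternion.imK_zero] using congrArg (fun q : ℍ => q.re) h
    · simpa [Quaternion.re_zero, Quaternion.imI_zero, Quaternion.imJ_zero, Quaternion.imK_zero] using congrArg (fun q : ℍ => q.imI) h
  · rintro rfl; exact cq_zero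
lemma cq_inv (z : ℂ) : cq z⁻¹ = (cq z)⁻¹ := by
  rcases eq_or_ne z 0 with rfl | hz
  · simp [cq_zero]
  · refine (eq_inv_of_mul_eq_one_left ?_)
    rw [← cq_mul, inv_mul_cancel₀ hz, cq_one]
lemma Q2_eq_zero {c d : ℂ} : Q2 c d = 0 ↔ c = 0 ∧ d = 0 := by
  have h : (0:ℍ) = Q2 0 0 := by simp [Q2, cq_zero]
  rw [h, Q2_eq_iff]
lemma Q2_add (a b c d : ℂ) : Q2 a b + Q2 c d = Q2 (a+c) (b+d) := by
  ext <;> simp [Q2, Quaternion.re_mul, Quaternion.imI_mul, Quaternion.imJ_mul, Quaternion.imK_mul] <;> ring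
lemma Q2_sub (a b c d : ℂ) : Q2 a b - Q2 c d = Q2 (a-c) (b-d) := by
  ext <;> simp [Q2, Quaternion.re_mul, Quaternion.imI_mul, Quaternion.imJ_mul, Quaternion.imK_mul] <;> ring
lemma two_eq_cq : (2:ℍ) = cq 2 := by
  have : ((2:ℕ):ℍ) = cq 2 := by
    ext <;> simp only [Quaternion.re_natCast, Quaternion.imI_natCast,
      Quaternion.imJ_natCast, Quaternion.imK_natCast, cq] <;> norm_num
  simpa using this
lemma Q2_mul_cq (a b e : ℂ) : Q2 a b * cq e = Q2 (a*e) (b*e) := by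
  rw [cq_eq_Q2, Q2_mul]; simp
lemma cq_mul_Q2 (e a b : ℂ) : cq e * Q2 a b = Q2 (e*a) ((starRingEnd ℂ) e * b) := by
  rw [cq_eq_Q2 e, Q2_mul]; simp
lemma Q2_half (a b : ℂ) : Q2 a b / 2 = Q2 (a/2) (b/2) := by
  rw [div_eq_mul_inv, two_eq_cq, ← cq_inv, Q2_mul_cq]
  congr 1 <;> ring
lemma re_mul_comm (x y : ℍ) : (x*y).re = (y*x).re := by
  simp [Quaternion.re_mul]; ring

lemma inv_mul_cancel_left' {x : ℍ} (hx : x ≠ 0) (y : ℍ) : x⁻¹ * (x * y) = y := by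
  rw [← mul_assoc, inv_mul_cancel₀ hx, one_mul]
lemma mul_inv_cancel_left' {x : ℍ} (hx : x ≠ 0) (y : ℍ) : x * (x⁻¹ * y) = y := by
  rw [← mul_assoc, mul_inv_cancel₀ hx, one_mul]
lemma sandwich {φ : ℍ} (hφ : φ ≠ 0) (x y : ℍ) :
    (φ*x*φ⁻¹)*(φ*y*φ⁻¹) = φ*(x*y)*φ⁻¹ := by
  simp only [mul_assoc]
  rw [inv_mul_cancel_left' hφ]
lemma sandwich_act {φ : ℍ} (hφ : φ ≠ 0) (x y : ℍ) :
    (φ*x*φ⁻¹)*(φ*y) = φ*(x*y) := by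
  simp only [mul_assoc]
  rw [inv_mul_cancel_left' hφ]
lemma sandwich_add (φ x y : ℍ) : φ*x*φ⁻¹ + φ*y*φ⁻¹ = φ*(x+y)*φ⁻¹ := by
  rw [mul_add, add_mul]
lemma two_inv_comm (y : ℍ) : (2:ℍ)⁻¹ * y = y * (2:ℍ)⁻¹ :=
  (Commute.inv_left₀ ((two_mul y).trans (mul_two y).symm)).eq
lemma sandwich_half (φ x : ℍ) : (φ*x*φ⁻¹)/2 = φ*(x/2)*φ⁻¹ := by
  rw [div_eq_mul_inv, div_eq_mul_inv, mul_assoc (φ*x), ← two_inv_comm φ⁻¹,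
    ← mul_assoc (φ*x), mul_assoc φ x]
lemma phiQ2 (φ : ℍ) (c d : ℂ) : φ * Q2 c d = φ * cq c + φ * qj * cq d := by
  rw [Q2, mul_add, ← mul_assoc]
def βv (μ : ℂ) : ℂ := bμ μ / (1 - aμ μ)
def wv (μ : ℂ) : ℂ := (starRingEnd ℂ) (βv μ) - Complex.I

lemma hμ1' {μ : ℂ} (hμ1 : μ ≠ 1) : μ - 1 ≠ 0 := sub_ne_zero.2 hμ1
lemma hν0 {μ : ℂ} (hμ0 : μ ≠ 0) : (starRingEnd ℂ) μ ≠ 0 := by simpa using hμ0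
lemma hν1 {μ : ℂ} (hμ1 : μ ≠ 1) : (starRingEnd ℂ) μ - 1 ≠ 0 := by
  rw [sub_ne_zero]
  intro h
  apply hμ1
  have := congrArg (starRingEnd ℂ) h
  simpa using this

lemma ha1 {μ : ℂ} (hμ0 : μ ≠ 0) (hμ1 : μ ≠ 1) : 1 - aμ μ ≠ 0 := by
  intro h
  apply hμ1
  have h2 : (μ - 1)^2 = 0 := by
    have h3 : (1 - aμ μ) * (2*μ) = 0 := by rw [h]; ring
    rw [aμ] at h3
    field_simp at h3
    have h4 : (-2*μ) * ((μ-1)^2) = 0 := by linear_combination (2*μ) * h3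
    rcases mul_eq_zero.1 h4 with h5 | h5
    · exact absurd (by linear_combination -h5/2 : μ = 0) hμ0
    · exact h5
  have := pow_eq_zero_iff (n := 2) (by norm_num) |>.1 h2
  exact sub_eq_zero.1 this

lemma hβval {μ : ℂ} (hμ0 : μ ≠ 0) (hμ1 : μ ≠ 1) :
    βv μ = Complex.I * (μ + 1) / (μ - 1) := by
  rw [βv, aμ, bμ, div_eq_div_iff (by rw [← aμ]; exact ha1 hμ0 hμ1) (hμ1' hμ1)]
  field_simp
  ring

lemma hβI {μ : ℂ} (hμ0 : μ ≠ 0) (hμ1 : μ ≠ 1) :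
    βv μ - Complex.I = 2*Complex.I/(μ-1) := by
  rw [hβval hμ0 hμ1, div_sub' (hμ1' hμ1), div_eq_div_iff (hμ1' hμ1) (hμ1' hμ1)]
  ring

lemma hβI0 {μ : ℂ} (hμ0 : μ ≠ 0) (hμ1 : μ ≠ 1) : βv μ - Complex.I ≠ 0 := by
  rw [hβI hμ0 hμ1]
  exact div_ne_zero (by simp [Complex.I_ne_zero]) (hμ1' hμ1)

lemma hwval {μ : ℂ} (hμ0 : μ ≠ 0) (hμ1 : μ ≠ 1) :
    wv μ = -2*Complex.I*(starRingEnd ℂ μ)/((starRingEnd ℂ μ) - 1) := by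
  rw [wv, hβval hμ0 hμ1]
  rw [map_div₀, map_mul, map_add, map_sub]
  simp only [Complex.conj_I, map_one]
  rw [div_sub' (hν1 hμ1), div_eq_div_iff (hν1 hμ1) (hν1 hμ1)]
  ring

lemma hw0 {μ : ℂ} (hμ0 : μ ≠ 0) (hμ1 : μ ≠ 1) : wv μ ≠ 0 := by
  rw [hwval hμ0 hμ1]
  apply div_ne_zero _ (hν1 hμ1)
  simp [Complex.I_ne_zero, hν0 hμ0, hμ0]

lemma V1 {μ : ℂ} (hμ0 : μ ≠ 0) (hμ1 : μ ≠ 1) :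
    γinf μ * wv μ = βv μ - Complex.I := by
  rw [hwval hμ0 hμ1, hβI hμ0 hμ1, γinf]
  have h1 : (1:ℂ) - μ ≠ 0 := by
    intro h; exact hμ1 (by linear_combination -h)
  field_simp [hν0 hμ0, hν1 hμ1, hμ1' hμ1]
  ring

lemma bμ_sq (μ : ℂ) : bμ μ ^ 2 = -(((μ⁻¹ - μ)/2)^2) := by
  rw [bμ]
  linear_combination (((μ⁻¹-μ)/2)^2) * Complex.I_sq

lemma V6 {μ : ℂ} (hμ0 : μ ≠ 0) (hμ1 : μ ≠ 1) :
    (aμ μ - 1)^2 + (bμ μ)^2 = 2*(1 - aμ μ) := by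
  rw [bμ_sq, aμ]
  field_simp
  ring

lemma conj_aμ (μ : ℂ) : (starRingEnd ℂ) (aμ μ - 1) = aμ ((starRingEnd ℂ) μ) - 1 := by
  simp [aμ, map_div₀, map_ofNat]

lemma conj_bμ (μ : ℂ) : (starRingEnd ℂ) (bμ μ) = -Complex.I * (((starRingEnd ℂ) μ)⁻¹ - (starRingEnd ℂ) μ)/2 := by
  simp [bμ, map_div₀, map_ofNat]
  try ring

lemma VCD {μ : ℂ} (hμ0 : μ ≠ 0) (hμ1 : μ ≠ 1) :
    bμ μ*(βv μ - Complex.I) + (starRingEnd ℂ) (aμ μ - 1)*wv μ*Complex.I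
      - (aμ μ - 1)*(βv μ - Complex.I)*Complex.I - (starRingEnd ℂ) (bμ μ)*wv μ = 0 := by
  rw [conj_aμ, conj_bμ, hβI hμ0 hμ1, hwval hμ0 hμ1, bμ, aμ, aμ]
  have hL : Complex.I * (μ⁻¹ - μ) / 2 * (2*Complex.I/(μ-1))
      + (((starRingEnd ℂ) μ + ((starRingEnd ℂ) μ)⁻¹)/2 - 1) * (-2*Complex.I*(starRingEnd ℂ) μ/((starRingEnd ℂ) μ-1)) * Complex.I
      - ((μ + μ⁻¹)/2 - 1) * (2*Complex.I/(μ-1)) * Complex.I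
      - (-Complex.I * (((starRingEnd ℂ) μ)⁻¹ - (starRingEnd ℂ) μ)/2) * (-2*Complex.I*(starRingEnd ℂ) μ/((starRingEnd ℂ) μ-1))
      = Complex.I^2 * ((μ⁻¹ - μ)/(μ-1) - (((starRingEnd ℂ) μ + ((starRingEnd ℂ) μ)⁻¹)/2 - 1)*2*(starRingEnd ℂ) μ/((starRingEnd ℂ) μ-1)
          - ((μ + μ⁻¹)/2 - 1)*2/(μ-1) - (((starRingEnd ℂ) μ)⁻¹ - (starRingEnd ℂ) μ)*(starRingEnd ℂ) μ/((starRingEnd ℂ) μ-1)) := by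
    ring
  rw [hL, Complex.I_sq]
  have e1 : (μ⁻¹ - μ)/(μ-1) - ((μ + μ⁻¹)/2 - 1)*2/(μ-1) = -2 := by
    rw [div_sub_div_same, div_eq_iff (hμ1' hμ1)]
    field_simp
    ring
  have e2 : (((starRingEnd ℂ) μ + ((starRingEnd ℂ) μ)⁻¹)/2 - 1)*2*(starRingEnd ℂ) μ/((starRingEnd ℂ) μ-1)
      + (((starRingEnd ℂ) μ)⁻¹ - (starRingEnd ℂ) μ)*(starRingEnd ℂ) μ/((starRingEnd ℂ) μ-1) = -2 := by
    rw [← add_div, div_eq_iff (hν1 hμ1)]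
    field_simp [hν0 hμ0]
    ring
  linear_combination -e1 + e2

/-- C: the complex factor by which T·T̂ acts on the eigenspace. -/
def Cv (μ m₁ : ℂ) : ℂ :=
  (m₁*(aμ μ - 1)*(βv μ - Complex.I) + bμ μ*(βv μ - Complex.I)
    - (starRingEnd ℂ) (aμ μ - 1)*(wv μ)*(m₁ - Complex.I))/2

theorem stmt_13 (μ : ℂ) (hμ0 : μ ≠ 0) (hμ1 : μ ≠ 1)
    (n : ℍ) (hre : n.re = 0) (hsq : n * n = -1)
    (φ : ℍ) (hφ : φ ≠ 0)
    (r : ℍ → ℍ)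
    (hr : ∀ c d : ℂ,
      r (φ * cq c + φ * qj * cq d) = φ * cq (γinf μ) * cq c + φ * qj * cq d) :
    (fun ψ => That μ n φ * ψ) '' {ψ : ℍ | n * ψ = ψ * qi}
        = r '' {ψ : ℍ | n * ψ = ψ * qi}
    ∧ {ψ : ℍ | ((Tq μ n φ)⁻¹ * n * Tq μ n φ) * ψ = ψ * qi}
        = r '' {ψ : ℍ | n * ψ = ψ * qi} := by
  have ha := ha1 hμ0 hμ1
  have hz0 : aμ μ - 1 ≠ 0 := by
    intro h; exact ha (by linear_combination -h)
  -- decomposition of m = φ⁻¹ n φ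
  obtain ⟨m₁, m₂, hmQ, hmre⟩ := exists_Q2 (φ⁻¹ * n * φ)
  have hmre0 : m₁.re = 0 := by
    rw [hmre, re_mul_comm, ← mul_assoc, mul_inv_cancel₀ hφ, one_mul, hre]
  have hc1 : (starRingEnd ℂ) m₁ = -m₁ := by
    apply Complex.ext <;> simp [hmre0]
  have hnφ : n * φ = φ * Q2 m₁ m₂ := by
    rw [← hmQ, ← mul_assoc, ← mul_assoc, mul_inv_cancel₀ hφ, one_mul]
  have hn : n = φ * Q2 m₁ m₂ * φ⁻¹ := by
    rw [← hnφ, mul_assoc, mul_inv_cancel₀ hφ, mul_one]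
  have hmsq : m₁*m₁ - (starRingEnd ℂ) m₂ * m₂ = -1 := by
    have h1 : (φ * Q2 m₁ m₂ * φ⁻¹) * (φ * Q2 m₁ m₂ * φ⁻¹) = -1 := by rw [← hn]; exact hsq
    rw [sandwich hφ, Q2_mul] at h1
    have h2 : φ * Q2 (m₁*m₁ - (starRingEnd ℂ) m₂ * m₂) ((starRingEnd ℂ) m₁ * m₂ + m₂ * m₁) * φ⁻¹
        = φ * Q2 (-1) 0 * φ⁻¹ := by
      rw [h1, ← cq_eq_Q2, show cq (-1) = (-1:ℍ) from by rw [show ((-1):ℂ) = -(1:ℂ) from by ring]; ext <;> simp [Quaternion.re_one, Quaternion.imI_one, Quaternion.imJ_one, Quaternion.imK_one]]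
      rw [mul_neg, mul_one, neg_mul, mul_inv_cancel₀ hφ]
    have h3 := mul_right_cancel₀ (inv_ne_zero hφ) h2
    exact (Q2_eq_iff.1 (mul_left_cancel₀ hφ h3)).1
  -- membership characterization
  have memE : ∀ c d : ℂ, (n * (φ * Q2 c d) = (φ * Q2 c d) * qi) ↔
      (m₁*c - (starRingEnd ℂ) m₂*d = c*Complex.I ∧ (starRingEnd ℂ) m₁*d + m₂*c = d*Complex.I) := by
    intro c d
    have lhs_eq : n * (φ * Q2 c d)
        = φ * Q2 (m₁*c - (starRingEnd ℂ) m₂*d) ((starRingEnd ℂ) m₁*d + m₂*c) := by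
      rw [← mul_assoc, hnφ, mul_assoc, Q2_mul]
    have rhs_eq : (φ * Q2 c d) * qi = φ * Q2 (c*Complex.I) (d*Complex.I) := by
      rw [qi_eq, mul_assoc, Q2_mul]
      simp only [mul_zero, sub_zero, zero_add]
    rw [lhs_eq, rhs_eq]
    constructor
    · intro h; exact Q2_eq_iff.1 (mul_left_cancel₀ hφ h)
    · rintro ⟨h1, h2⟩; rw [h1, h2]
  have hscale : ∀ c d k : ℂ,
      (m₁*c - (starRingEnd ℂ) m₂*d = c*Complex.I ∧ (starRingEnd ℂ) m₁*d + m₂*c = d*Complex.I) →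
      (m₁*(c*k) - (starRingEnd ℂ) m₂*(d*k) = (c*k)*Complex.I ∧
        (starRingEnd ℂ) m₁*(d*k) + m₂*(c*k) = (d*k)*Complex.I) := by
    rintro c d k ⟨h1, h2⟩
    exact ⟨by linear_combination k*h1, by linear_combination k*h2⟩
  -- representation of Tq and That
  have hu0 : ((1 - aμ μ)/2 : ℂ) ≠ 0 := div_ne_zero ha two_ne_zero
  have hρinv : (ρhat μ φ)⁻¹ = φ * cq (((1-aμ μ)/2)⁻¹) * φ⁻¹ := by
    refine (inv_eq_of_mul_eq_one_right ?_)
    rw [ρhat, sandwich hφ, ← cq_mul, mul_inv_cancel₀ hu0, cq_one, mul_one, mul_inv_cancel₀ hφ]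
  have hTq_rep : Tq μ n φ
      = φ * Q2 ((m₁*(aμ μ - 1) + bμ μ)/2) (m₂*(aμ μ - 1)/2) * φ⁻¹ := by
    rw [Tq, hn, sandwich hφ, sandwich_add, sandwich_half, Q2_mul_cq,
      cq_eq_Q2 (bμ μ), Q2_add, Q2_half, add_zero]
  have hThat_rep : That μ n φ = φ * (cq (βv μ) - Q2 m₁ m₂) * φ⁻¹ := by
    rw [That, hTq_rep, hρinv, sandwich hφ, Q2_mul_cq]
    congr 2
    rw [cq_eq_Q2 (βv μ), Q2_sub, Q2_eq_iff]
    constructor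
    · rw [βv, inv_div]
      field_simp
      ring
    · rw [inv_div]
      field_simp
      ring
  -- action of That on eigenvectors
  have hThatact : ∀ c d : ℂ,
      (m₁*c - (starRingEnd ℂ) m₂*d = c*Complex.I ∧ (starRingEnd ℂ) m₁*d + m₂*c = d*Complex.I) →
      That μ n φ * (φ * Q2 c d) = φ * Q2 ((βv μ - Complex.I)*c) (wv μ * d) := by
    rintro c d ⟨h1, h2⟩
    rw [hThat_rep, sandwich_act hφ, sub_mul, cq_mul_Q2, Q2_mul, h1, h2, Q2_sub]
    refine congrArg (fun x => φ * x) (Q2_eq_iff.2 ⟨by ring, ?_⟩)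
    rw [wv]; ring
  -- action of Tq
  have hTqact : ∀ c d : ℂ, Tq μ n φ * (φ * Q2 c d)
      = φ * Q2 ((m₁*(aμ μ - 1) + bμ μ)/2 * c - (starRingEnd ℂ) m₂ * (starRingEnd ℂ) (aμ μ - 1)/2 * d)
          (((-m₁) * (starRingEnd ℂ) (aμ μ - 1) + (starRingEnd ℂ) (bμ μ))/2 * d + m₂*(aμ μ - 1)/2 * c) := by
    intro c d
    rw [hTq_rep, sandwich_act hφ, Q2_mul]
    have e1 : (starRingEnd ℂ) ((m₁*(aμ μ - 1) + bμ μ)/2)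
        = ((-m₁) * (starRingEnd ℂ) (aμ μ - 1) + (starRingEnd ℂ) (bμ μ))/2 := by
      rw [map_div₀, map_add, map_mul, hc1, map_ofNat]
    have e2 : (starRingEnd ℂ) (m₂*(aμ μ - 1)/2)
        = (starRingEnd ℂ) m₂ * (starRingEnd ℂ) (aμ μ - 1)/2 := by
      rw [map_div₀, map_mul, map_ofNat]
    rw [e1, e2]
  -- the composite T ∘ T̂ acts on E as multiplication by Cv
  have hTT : ∀ c d : ℂ,
      (m₁*c - (starRingEnd ℂ) m₂*d = c*Complex.I ∧ (starRingEnd ℂ) m₁*d + m₂*c = d*Complex.I) →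
      Tq μ n φ * (That μ n φ * (φ * Q2 c d)) = φ * Q2 (Cv μ m₁ * c) (Cv μ m₁ * d) := by
    rintro c d ⟨h1, h2⟩
    rw [hThatact c d ⟨h1, h2⟩, hTqact]
    refine congrArg (fun x => φ * x) (Q2_eq_iff.2 ⟨?_, ?_⟩)
    · rw [Cv]
      linear_combination ((starRingEnd ℂ) (aμ μ - 1) * wv μ/2) * h1
    · rw [Cv]
      linear_combination ((aμ μ - 1)*(βv μ - Complex.I)/2) * h2
        - ((aμ μ - 1)*(βv μ - Complex.I)/2*d) * hc1 - (d/2) * (VCD hμ0 hμ1)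
  -- Tq is nonzero
  have hTq0 : Tq μ n φ ≠ 0 := by
    intro h0
    rw [hTq_rep] at h0
    have h1 : Q2 ((m₁*(aμ μ - 1) + bμ μ)/2) (m₂*(aμ μ - 1)/2) = 0 := by
      rcases mul_eq_zero.1 h0 with h | h
      · rcases mul_eq_zero.1 h with h | h
        · exact absurd h hφ
        · exact h
      · exact absurd h (inv_ne_zero hφ)
    obtain ⟨g1, g2⟩ := Q2_eq_zero.1 h1
    have g1' : m₁*(aμ μ - 1) + bμ μ = 0 :=
      (div_eq_zero_iff.1 g1).resolve_right two_ne_zero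
    have g2' : m₂ = 0 := by
      have := (div_eq_zero_iff.1 g2).resolve_right two_ne_zero
      exact (mul_eq_zero.1 this).resolve_right hz0
    have g3 : (starRingEnd ℂ) m₂ = 0 := by rw [g2']; simp
    have g4 : m₁*m₁ = -1 := by linear_combination hmsq + m₂ * g3
    have g5 : (2:ℂ)*(1 - aμ μ) = 0 := by
      have hV := V6 hμ0 hμ1
      linear_combination -hV + (bμ μ - m₁*(aμ μ - 1)) * g1' + ((aμ μ - 1)*(aμ μ - 1)) * g4
    rcases mul_eq_zero.1 g5 with h | h
    · norm_num at h
    · exact ha h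
  -- Cv is nonzero
  have hC0 : Cv μ m₁ ≠ 0 := by
    intro hC
    have hkill : ∀ c d : ℂ,
        (m₁*c - (starRingEnd ℂ) m₂*d = c*Complex.I ∧ (starRingEnd ℂ) m₁*d + m₂*c = d*Complex.I) →
        (c = 0 ∧ d = 0) := by
      intro c d he
      have h1 := hTT c d he
      rw [hC, zero_mul, zero_mul, show Q2 (0:ℂ) 0 = (0:ℍ) from Q2_eq_zero.2 ⟨rfl, rfl⟩,
        mul_zero] at h1
      rcases mul_eq_zero.1 h1 with h | h
      · exact absurd h hTq0
      · rw [hThatact c d he] at h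
        rcases mul_eq_zero.1 h with h' | h'
        · exact absurd h' hφ
        · obtain ⟨p1, p2⟩ := Q2_eq_zero.1 h'
          exact ⟨(mul_eq_zero.1 p1).resolve_left (hβI0 hμ0 hμ1),
            (mul_eq_zero.1 p2).resolve_left (hw0 hμ0 hμ1)⟩
    by_cases hcase : m₁ = -Complex.I ∧ m₂ = 0
    · have he : m₁*(0:ℂ) - (starRingEnd ℂ) m₂*(1:ℂ) = (0:ℂ)*Complex.I ∧
          (starRingEnd ℂ) m₁*(1:ℂ) + m₂*(0:ℂ) = (1:ℂ)*Complex.I := by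
        constructor
        · rw [hcase.2]; simp
        · rw [hc1, hcase.1]; ring
      exact one_ne_zero (hkill 0 1 he).2
    · have he : m₁*(m₁ + Complex.I) - (starRingEnd ℂ) m₂*m₂ = (m₁ + Complex.I)*Complex.I ∧
          (starRingEnd ℂ) m₁*m₂ + m₂*(m₁ + Complex.I) = m₂*Complex.I := by
        constructor
        · linear_combination hmsq - Complex.I_sq
        · rw [hc1]; ring
      obtain ⟨q1, q2⟩ := hkill _ _ he
      exact hcase ⟨by linear_combination q1, q2⟩
  -- γ·w = β − I
  have hγw := V1 hμ0 hμ1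
  have hw1 : wv μ * (wv μ)⁻¹ = 1 := mul_inv_cancel₀ (hw0 hμ0 hμ1)
  have hC1 : Cv μ m₁ * (Cv μ m₁)⁻¹ = 1 := mul_inv_cancel₀ hC0
  -- r in Q2 form
  have hrQ : ∀ c d : ℂ, r (φ * Q2 c d) = φ * Q2 (γinf μ * c) d := by
    intro c d
    rw [phiQ2 φ c d, hr, phiQ2 φ (γinf μ * c) d, mul_assoc φ, ← cq_mul]
  -- decomposition
  have hdec : ∀ ψ : ℍ, ∃ c d : ℂ, ψ = φ * Q2 c d := by
    intro ψ
    obtain ⟨c, d, hcd, -⟩ := exists_Q2 (φ⁻¹ * ψ)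
    exact ⟨c, d, by rw [← hcd, ← mul_assoc, mul_inv_cancel₀ hφ, one_mul]⟩
  -- Part 1
  have part1 : (fun ψ => That μ n φ * ψ) '' {ψ : ℍ | n * ψ = ψ * qi}
      = r '' {ψ : ℍ | n * ψ = ψ * qi} := by
    ext ψ'
    simp only [Set.mem_image, Set.mem_setOf_eq]
    constructor
    · rintro ⟨ψ, hψ, rfl⟩
      obtain ⟨c, d, rfl⟩ := hdec ψ
      obtain ⟨h1, h2⟩ := (memE c d).1 hψ
      refine ⟨φ * Q2 (c * wv μ) (d * wv μ), (memE _ _).2 (hscale c d (wv μ) ⟨h1, h2⟩), ?_⟩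
      rw [hrQ, hThatact c d ⟨h1, h2⟩]
      exact (congrArg (fun x => φ * x) (Q2_eq_iff.2
        ⟨by linear_combination (-c) * hγw, by ring⟩)).symm
    · rintro ⟨ψ, hψ, rfl⟩
      obtain ⟨c, d, rfl⟩ := hdec ψ
      obtain ⟨h1, h2⟩ := (memE c d).1 hψ
      refine ⟨φ * Q2 (c * (wv μ)⁻¹) (d * (wv μ)⁻¹),
        (memE _ _).2 (hscale c d (wv μ)⁻¹ ⟨h1, h2⟩), ?_⟩
      rw [hrQ, hThatact _ _ (hscale c d (wv μ)⁻¹ ⟨h1, h2⟩)]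
      exact congrArg (fun x => φ * x) (Q2_eq_iff.2
        ⟨by linear_combination (-(c*(wv μ)⁻¹))*hγw + (γinf μ * c)*hw1,
         by linear_combination d * hw1⟩)
  refine ⟨part1, ?_⟩
  -- Part 2
  rw [← part1]
  ext ψ'
  simp only [Set.mem_image, Set.mem_setOf_eq]
  constructor
  · intro hψ
    have hTn : n * (Tq μ n φ * ψ') = (Tq μ n φ * ψ') * qi := by
      calc n * (Tq μ n φ * ψ')
          = Tq μ n φ * ((Tq μ n φ)⁻¹ * (n * (Tq μ n φ * ψ'))) :=
            (mul_inv_cancel_left' hTq0 _).symm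
        _ = Tq μ n φ * (((Tq μ n φ)⁻¹ * n * Tq μ n φ) * ψ') := by
            simp only [mul_assoc]
        _ = Tq μ n φ * (ψ' * qi) := by rw [hψ]
        _ = (Tq μ n φ * ψ') * qi := by rw [mul_assoc]
    obtain ⟨c, d, hcd⟩ := hdec (Tq μ n φ * ψ')
    rw [hcd] at hTn
    obtain ⟨h1, h2⟩ := (memE c d).1 hTn
    refine ⟨φ * Q2 (c * (Cv μ m₁)⁻¹) (d * (Cv μ m₁)⁻¹),
      (memE _ _).2 (hscale c d (Cv μ m₁)⁻¹ ⟨h1, h2⟩), ?_⟩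
    apply mul_left_cancel₀ hTq0
    rw [hTT _ _ (hscale c d (Cv μ m₁)⁻¹ ⟨h1, h2⟩), hcd]
    exact congrArg (fun x => φ * x) (Q2_eq_iff.2
      ⟨by linear_combination c * hC1, by linear_combination d * hC1⟩)
  · rintro ⟨ψ, hψ, rfl⟩
    obtain ⟨c, d, rfl⟩ := hdec ψ
    obtain ⟨h1, h2⟩ := (memE c d).1 hψ
    have hE2 : n * (Tq μ n φ * (That μ n φ * (φ * Q2 c d)))
        = (Tq μ n φ * (That μ n φ * (φ * Q2 c d))) * qi := by
      rw [hTT c d ⟨h1, h2⟩]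
      exact (memE (Cv μ m₁ * c) (Cv μ m₁ * d)).2
        ⟨by linear_combination (Cv μ m₁) * h1, by linear_combination (Cv μ m₁) * h2⟩
    calc ((Tq μ n φ)⁻¹ * n * Tq μ n φ) * (That μ n φ * (φ * Q2 c d))
        = (Tq μ n φ)⁻¹ * (n * (Tq μ n φ * (That μ n φ * (φ * Q2 c d)))) := by
          simp only [mul_assoc]
      _ = (Tq μ n φ)⁻¹ * ((Tq μ n φ * (That μ n φ * (φ * Q2 c d))) * qi) := by rw [hE2]
      _ = ((Tq μ n φ)⁻¹ * (Tq μ n φ * (That μ n φ * (φ * Q2 c d)))) * qi := by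
          simp only [mul_assoc]
      _ = (That μ n φ * (φ * Q2 c d)) * qi := by rw [inv_mul_cancel_left' hTq0]
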